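/- arXiv:1011.5043 — 2 statements merged into one kernel-verified Lean document; each statement's English description precedes it below -/
import Mathlib

section
/- Let Z be a random vector in ℝ^d and r > 0. Then E[(r^d / ‖Z‖^d) · 𝟙_{‖Z‖ ≥ r}] ≤ d ∫_r^∞ (r^d / ρ^{d+1}) P(‖Z‖ ≤ ρ) dρ. -/
open MeasureTheory Real Set

-- auxiliary: pointwise congruence on Ioi x
lemma aux_congr (d : ℕ) (r x : ℝ) (hx : 0 < x) :
    ∀ ρ ∈ Ioi x, (d : ℝ) * r ^ d / ρ ^ (d + 1) = ((d : ℝ) * r ^ d) * ρ ^ (-(d + 1 : ℝ)) := by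
  intro ρ hρ
  have hρ0 : (0:ℝ) < ρ := hx.trans hρ
  rw [Real.rpow_neg hρ0.le, div_eq_mul_inv]
  congr 1
  rw [← Real.rpow_natCast ρ (d + 1)]
  push_cast
  ring_nf

lemma aux_integrable (d : ℕ) (hd : 1 ≤ d) (r x : ℝ) (hx : 0 < x) :
    IntegrableOn (fun ρ : ℝ => (d : ℝ) * r ^ d / ρ ^ (d + 1)) (Ioi x) := by
  have h : (-(d + 1 : ℝ)) < -1 := by
    have : (1:ℝ) ≤ d := by exact_mod_cast hd
    linarith
  have := (integrableOn_Ioi_rpow_of_lt h hx).const_mul ((d : ℝ) * r ^ d)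
  exact IntegrableOn.congr_fun this (fun ρ hρ => (aux_congr d r x hx ρ hρ).symm) measurableSet_Ioi

lemma aux_calc (d : ℕ) (hd : 1 ≤ d) (r x : ℝ) (hx : 0 < x) :
    ∫ ρ in Ioi x, (d : ℝ) * r ^ d / ρ ^ (d + 1) = r ^ d / x ^ d := by
  have h : (-(d + 1 : ℝ)) < -1 := by
    have : (1:ℝ) ≤ d := by exact_mod_cast hd
    linarith
  have hd0 : (d : ℝ) ≠ 0 := by positivity
  rw [setIntegral_congr_fun measurableSet_Ioi (aux_congr d r x hx),
    integral_const_mul, integral_Ioi_rpow_of_lt h hx]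
  have : -(d + 1 : ℝ) + 1 = -(d : ℝ) := by ring
  rw [this, Real.rpow_neg hx.le, ← Real.rpow_natCast x d]
  field_simp

/-- For a random vector `Z` in `ℝ^d` and `r > 0`,
`E[(r^d/‖Z‖^d) 𝟙_{‖Z‖ ≥ r}] ≤ d ∫_r^∞ (r^d/ρ^{d+1}) P(‖Z‖ ≤ ρ)dρ`. -/
theorem expectation_tail_le_integral (d : ℕ) (hd : 1 ≤ d) {Ω : Type*} [MeasurableSpace Ω]
    (ℙ : Measure Ω) [IsProbabilityMeasure ℙ]
    (Z : Ω → EuclideanSpace ℝ (Fin d)) (hZ : Measurable Z) (r : ℝ) (hr : 0 < r) :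
    ∫ ω in {ω | r ≤ ‖Z ω‖}, r ^ d / ‖Z ω‖ ^ d ∂ℙ ≤
      d * ∫ ρ in Ioi r, r ^ d / ρ ^ (d + 1) * (ℙ {ω | ‖Z ω‖ ≤ ρ}).toReal := by
  have hmZ : Measurable fun ω => ‖Z ω‖ := hZ.norm
  set S : Set Ω := {ω | r ≤ ‖Z ω‖} with hS
  have hSm : MeasurableSet S := measurableSet_le measurable_const hmZ
  set c : ℝ → ℝ := fun ρ => (d : ℝ) * r ^ d / ρ ^ (d + 1) with hcdef
  have hcm : Measurable c := measurable_const.div ((measurable_id.pow_const _))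
  have hc_nonneg : ∀ ρ ∈ Ioi r, 0 ≤ c ρ := by
    intro ρ hρ
    have : (0:ℝ) < ρ := hr.trans hρ
    positivity
  set Preal : ℝ → ℝ := fun ρ => (ℙ {ω | ‖Z ω‖ ≤ ρ}).toReal with hPdef
  have hPmono : Monotone Preal := by
    intro a b hab
    exact ENNReal.toReal_mono (measure_ne_top _ _)
      (measure_mono (fun ω hω => le_trans hω hab))
  have hPm : Measurable Preal := hPmono.measurable
  have hP01 : ∀ ρ, 0 ≤ Preal ρ ∧ Preal ρ ≤ 1 := by
    intro ρ
    refine ⟨ENNReal.toReal_nonneg, ?_⟩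
    have := prob_le_one (μ := ℙ) (s := {ω | ‖Z ω‖ ≤ ρ})
    simpa using ENNReal.toReal_mono ENNReal.one_ne_top this
  -- integrability of the RHS integrand
  have hg_int : IntegrableOn (fun ρ => c ρ * Preal ρ) (Ioi r) := by
    refine Integrable.mono' (aux_integrable d hd r r hr)
      ((hcm.mul hPm).aestronglyMeasurable) ?_
    filter_upwards [ae_restrict_mem measurableSet_Ioi] with ρ hρ
    have h1 := hc_nonneg ρ hρ
    have h2 := hP01 ρ
    rw [Real.norm_eq_abs, abs_of_nonneg (mul_nonneg h1 h2.1)]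
    calc c ρ * Preal ρ ≤ c ρ * 1 := mul_le_mul_of_nonneg_left h2.2 h1
    _ = c ρ := mul_one _
  -- the two lintegrals
  set L : ENNReal := ∫⁻ ω in S, ENNReal.ofReal (r ^ d / ‖Z ω‖ ^ d) ∂ℙ with hLdef
  set R : ENNReal := ∫⁻ ρ in Ioi r, ENNReal.ofReal (c ρ) * ℙ {ω | ‖Z ω‖ ≤ ρ} ∂volume
    with hRdef
  -- LHS = L.toReal
  have hLHS : ∫ ω in S, r ^ d / ‖Z ω‖ ^ d ∂ℙ = L.toReal := by
    rw [integral_eq_lintegral_of_nonneg_ae]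
    · exact ae_of_all _ fun ω => by positivity
    · exact (measurable_const.div ((hmZ.pow_const d))).aestronglyMeasurable
  -- RHS = R.toReal
  have hR_eq : R = ENNReal.ofReal (∫ ρ in Ioi r, c ρ * Preal ρ) := by
    rw [ofReal_integral_eq_lintegral_ofReal hg_int
      (by filter_upwards [ae_restrict_mem measurableSet_Ioi] with ρ hρ
          exact mul_nonneg (hc_nonneg ρ hρ) (hP01 ρ).1)]
    refine (setLIntegral_congr_fun measurableSet_Ioi (fun ρ hρ => ?_)).symm
    rw [ENNReal.ofReal_mul (hc_nonneg ρ hρ), ENNReal.ofReal_toReal (measure_ne_top _ _)]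
  have hR_ne : R ≠ ⊤ := by rw [hR_eq]; exact ENNReal.ofReal_ne_top
  have hRHS : (d : ℝ) * ∫ ρ in Ioi r, r ^ d / ρ ^ (d + 1) * Preal ρ = R.toReal := by
    rw [hR_eq, ENNReal.toReal_ofReal]
    · rw [← integral_const_mul]
      refine integral_congr_ae (ae_of_all _ fun ρ => ?_)
      simp only [hcdef]
      ring
    · exact setIntegral_nonneg measurableSet_Ioi fun ρ hρ =>
        mul_nonneg (hc_nonneg ρ hρ) (hP01 ρ).1
  -- key pointwise identity on S
  have hpoint : ∀ ω ∈ S, ENNReal.ofReal (r ^ d / ‖Z ω‖ ^ d)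
      = ∫⁻ ρ in Ioi r, (if ‖Z ω‖ ≤ ρ then ENNReal.ofReal (c ρ) else 0) ∂volume := by
    intro ω hω
    have hx : r ≤ ‖Z ω‖ := hω
    have hx0 : 0 < ‖Z ω‖ := hr.trans_le hx
    set x := ‖Z ω‖
    have h1 : ∫⁻ ρ in Ioi r, (if x ≤ ρ then ENNReal.ofReal (c ρ) else 0) ∂volume
        = ∫⁻ ρ in Ioi r, (Ici x).indicator (fun ρ => ENNReal.ofReal (c ρ)) ρ ∂volume := by
      refine lintegral_congr fun ρ => ?_
      simp [Set.indicator_apply, mem_Ici]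
    rw [h1, lintegral_indicator measurableSet_Ici, Measure.restrict_restrict measurableSet_Ici]
    have h2 : (Ici x ∩ Ioi r : Set ℝ) =ᵐ[volume] (Ioi x : Set ℝ) := by
      have h3 : (Ici x : Set ℝ) =ᵐ[volume] (Ioi x : Set ℝ) := (Ioi_ae_eq_Ici (a := x)).symm
      have h4 : (Ioi x ∩ Ioi r : Set ℝ) = Ioi x := by
        rw [Set.Ioi_inter_Ioi, max_eq_left hx]
      rw [← h4]
      exact h3.inter (Filter.EventuallyEq.rfl)
    rw [Measure.restrict_congr_set h2,
      ← ofReal_integral_eq_lintegral_ofReal (aux_integrable d hd r x hx0)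
        (by filter_upwards [ae_restrict_mem measurableSet_Ioi] with ρ hρ
            have hρ0 : (0:ℝ) < ρ := hx0.trans hρ
            positivity),
      aux_calc d hd r x hx0]
  -- main chain: L ≤ R
  have hmain : L ≤ R := by
    rw [hLdef, setLIntegral_congr_fun hSm hpoint]
    rw [lintegral_lintegral_swap]
    · refine lintegral_mono fun ρ => ?_
      have hTm : MeasurableSet {ω | ‖Z ω‖ ≤ ρ} := measurableSet_le hmZ measurable_const
      have h5 : ∫⁻ ω in S, (if ‖Z ω‖ ≤ ρ then ENNReal.ofReal (c ρ) else 0) ∂ℙ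
          = ENNReal.ofReal (c ρ) * (ℙ.restrict S) {ω | ‖Z ω‖ ≤ ρ} := by
        have : ∀ ω, (if ‖Z ω‖ ≤ ρ then ENNReal.ofReal (c ρ) else 0)
            = ({ω | ‖Z ω‖ ≤ ρ}).indicator (fun _ => ENNReal.ofReal (c ρ)) ω := by
          intro ω; simp [Set.indicator_apply]
        rw [lintegral_congr this, lintegral_indicator hTm, setLIntegral_const]
      rw [h5, Measure.restrict_apply hTm]
      exact mul_le_mul_right (measure_mono inter_subset_left) _
    · apply Measurable.aemeasurable
      exact Measurable.ite (measurableSet_le (hmZ.comp measurable_fst) measurable_snd)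
        ((ENNReal.measurable_ofReal.comp hcm).comp measurable_snd) measurable_const
  rw [hLHS, ← hPdef] at *
  rw [show (∫ ρ in Ioi r, r ^ d / ρ ^ (d + 1) * (ℙ {ω | ‖Z ω‖ ≤ ρ}).toReal) =
      ∫ ρ in Ioi r, r ^ d / ρ ^ (d + 1) * Preal ρ from rfl]
  rw [hRHS]
  exact ENNReal.toReal_mono hR_ne hmain
end

section
/- Let Z be a random vector in ℝ^d such that P(‖Z‖ ≤ ρ) ≤ K min(1, ρ^d / a^d) for all ρ > 0, where K, a > 0 are constants. Then for every ε ∈ (0,1) there is a constant K' (depending only on K, d, ε) such that for all r > 0, E[min(1, r^d ‖Z‖^{-d})] ≤ K' min(1, r^{d-ε} / a^{d-ε}). -/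
open MeasureTheory Real Set

lemma min_one_le_rpow {x θ : ℝ} (hx : 0 ≤ x) (hθ0 : 0 < θ) (hθ1 : θ ≤ 1) :
    min 1 x ≤ x ^ θ := by
  rcases le_or_gt 1 x with h | h
  · rw [min_eq_left h]
    exact Real.one_le_rpow h hθ0.le
  · rw [min_eq_right h.le]
    rcases eq_or_lt_of_le hx with h0 | h0
    · rw [← h0, Real.zero_rpow hθ0.ne']
    · calc x = x ^ (1:ℝ) := (Real.rpow_one x).symm
        _ ≤ x ^ θ := Real.rpow_le_rpow_of_exponent_ge h0 h.le hθ1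

/-- If `P(‖Z‖ ≤ ρ) ≤ K min(1, ρ^d/a^d)` for all `ρ > 0`, then for every `ε ∈ (0,1)`
there is `K'` (depending only on `K`, `d`, `ε`) with
`E[min(1, r^d ‖Z‖^{-d})] ≤ K' min(1, r^{d-ε}/a^{d-ε})` for all `r > 0`. -/
theorem expectation_min_bound (d : ℕ) (hd : 1 ≤ d) (K : ℝ) (hK : 0 < K)
    (ε : ℝ) (hε : ε ∈ Set.Ioo (0 : ℝ) 1) :
    ∃ K' : ℝ, 0 < K' ∧
      ∀ (Ω : Type) (_ : MeasurableSpace Ω) (ℙ : Measure Ω), IsProbabilityMeasure ℙ →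
        ∀ (Z : Ω → EuclideanSpace ℝ (Fin d)), Measurable Z →
          ∀ a : ℝ, 0 < a →
            (∀ ρ : ℝ, 0 < ρ → (ℙ {ω | ‖Z ω‖ ≤ ρ}).toReal ≤ K * min 1 (ρ ^ d / a ^ d)) →
            ∀ r : ℝ, 0 < r →
              (∫ ω, (if ‖Z ω‖ = 0 then 1 else min 1 (r ^ d / ‖Z ω‖ ^ d)) ∂ℙ) ≤
                K' * min 1 (r ^ ((d : ℝ) - ε) / a ^ ((d : ℝ) - ε)) := by
  obtain ⟨hε0, hε1⟩ := hε
  have hd1 : (1:ℝ) ≤ d := by exact_mod_cast hd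
  have hd0 : (0:ℝ) < d := by linarith
  set θ : ℝ := ((d:ℝ) - ε) / d with hθdef
  have hθpos : 0 < θ := div_pos (by linarith) hd0
  have hθlt : θ < 1 := by rw [div_lt_one hd0]; linarith
  refine ⟨max 1 (K * ((d:ℝ)/ε)), lt_of_lt_of_le one_pos (le_max_left _ _), ?_⟩
  intro Ω _ ℙ hP Z hZ a ha hZa r hr
  set f : Ω → ℝ := fun ω => if ‖Z ω‖ = 0 then 1 else min 1 (r ^ d / ‖Z ω‖ ^ d) with hfdef
  have hf0 : ∀ ω, 0 ≤ f ω := by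
    intro ω
    simp only [hfdef]
    split
    · norm_num
    · next h =>
      have : 0 < ‖Z ω‖ := lt_of_le_of_ne (norm_nonneg _) (Ne.symm h)
      positivity
  have hf1 : ∀ ω, f ω ≤ 1 := by
    intro ω
    simp only [hfdef]
    split
    · exact le_rfl
    · exact min_le_left _ _
  have hfm : Measurable f := by
    apply Measurable.ite
    · exact (hZ.norm) (measurableSet_singleton 0)
    · exact measurable_const
    · exact (measurable_const.min ((measurable_const.div ((hZ.norm).pow_const d))))
  have key : ∫ ω, f ω ∂ℙ = (∫⁻ ω, ENNReal.ofReal (f ω) ∂ℙ).toReal :=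
    integral_eq_lintegral_of_nonneg_ae (ae_of_all _ hf0) hfm.aestronglyMeasurable
  set s : ℝ := r ^ d / a ^ d with hsdef
  have hs0 : 0 < s := div_pos (pow_pos hr d) (pow_pos ha d)
  set C : ℝ := K * s ^ θ with hCdef
  have hC0 : 0 ≤ C := mul_nonneg hK.le (Real.rpow_nonneg hs0.le θ)
  have lc : ∫⁻ ω, ENNReal.ofReal (f ω) ∂ℙ = ∫⁻ t in Ioi (0:ℝ), ℙ {ω | t ≤ f ω} :=
    lintegral_eq_lintegral_meas_le ℙ (ae_of_all _ hf0) hfm.aemeasurable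
  -- pointwise bound
  have ptw : ∀ t ∈ Ioi (0:ℝ), ℙ {ω | t ≤ f ω} ≤
      (Ioc (0:ℝ) 1).indicator (fun t => ENNReal.ofReal (C * t ^ (-θ))) t := by
    intro t ht
    rw [mem_Ioi] at ht
    by_cases h1 : t ≤ 1
    · rw [Set.indicator_of_mem (Set.mem_Ioc.mpr ⟨ht, h1⟩)]
      have hρ : 0 < r * t ^ (-(1:ℝ)/d) := mul_pos hr (Real.rpow_pos_of_pos ht _)
      have hρd : (r * t ^ (-(1:ℝ)/d)) ^ d = r ^ d * t ^ (-1:ℝ) := by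
        rw [mul_pow, ← Real.rpow_natCast (t ^ (-(1:ℝ)/d)) d, ← Real.rpow_mul ht.le]
        congr 2
        field_simp
      have hsub : {ω | t ≤ f ω} ⊆ {ω | ‖Z ω‖ ≤ r * t ^ (-(1:ℝ)/d)} := by
        intro ω hω
        simp only [mem_setOf_eq, hfdef] at hω ⊢
        by_cases hx : ‖Z ω‖ = 0
        · rw [hx]; exact hρ.le
        · rw [if_neg hx] at hω
          have hx0 : 0 < ‖Z ω‖ := lt_of_le_of_ne (norm_nonneg _) (Ne.symm hx)
          have h2 : t ≤ r ^ d / ‖Z ω‖ ^ d := le_trans hω (min_le_right _ _)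
          have h3 : ‖Z ω‖ ^ d ≤ (r * t ^ (-(1:ℝ)/d)) ^ d := by
            rw [hρd, Real.rpow_neg_one, ← div_eq_mul_inv, le_div_iff₀ ht]
            rw [le_div_iff₀ (pow_pos hx0 d)] at h2
            linarith [mul_comm t (‖Z ω‖ ^ d)]
          exact (pow_le_pow_iff_left₀ (norm_nonneg _) hρ.le (by omega)).mp h3
      calc ℙ {ω | t ≤ f ω} ≤ ℙ {ω | ‖Z ω‖ ≤ r * t ^ (-(1:ℝ)/d)} := measure_mono hsub
        _ ≤ ENNReal.ofReal (C * t ^ (-θ)) := by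
            rw [← ENNReal.ofReal_toReal (measure_ne_top ℙ _)]
            apply ENNReal.ofReal_le_ofReal
            have e1 : (r * t ^ (-(1:ℝ)/d)) ^ d / a ^ d = s / t := by
              rw [hρd, Real.rpow_neg_one, hsdef]
              field_simp
            calc (ℙ {ω | ‖Z ω‖ ≤ r * t ^ (-(1:ℝ)/d)}).toReal
                ≤ K * min 1 ((r * t ^ (-(1:ℝ)/d)) ^ d / a ^ d) := hZa _ hρ
              _ = K * min 1 (s / t) := by rw [e1]
              _ ≤ K * (s / t) ^ θ := by
                  apply mul_le_mul_of_nonneg_left _ hK.le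
                  exact min_one_le_rpow (div_nonneg hs0.le ht.le) hθpos hθlt.le
              _ = C * t ^ (-θ) := by
                  rw [hCdef, Real.div_rpow hs0.le ht.le, Real.rpow_neg ht.le,
                    mul_assoc, div_eq_mul_inv]
    · rw [Set.indicator_of_notMem (fun h => h1 h.2)]
      have : {ω | t ≤ f ω} = ∅ := by
        ext ω
        simp only [mem_setOf_eq, mem_empty_iff_false, iff_false, not_le]
        exact lt_of_le_of_lt (hf1 ω) (lt_of_not_ge h1)
      simp [this]
  -- bound the lintegral
  have hIntR : IntegrableOn (fun t : ℝ => C * t ^ (-θ)) (Ioc 0 1) volume := by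
    have h := intervalIntegral.intervalIntegrable_rpow' (a := 0) (b := 1)
      (show (-1:ℝ) < -θ by linarith)
    rw [intervalIntegrable_iff_integrableOn_Ioc_of_le zero_le_one] at h
    exact h.const_mul C
  have hval : ∫ t in Ioc (0:ℝ) 1, C * t ^ (-θ) = C * ((d:ℝ)/ε) := by
    rw [← intervalIntegral.integral_of_le zero_le_one,
      intervalIntegral.integral_const_mul,
      integral_rpow (Or.inl (show (-1:ℝ) < -θ by linarith))]
    have h2 : -θ + 1 = ε / d := by rw [hθdef]; field_simp; ring
    rw [h2, Real.one_rpow, Real.zero_rpow (by positivity : ε/(d:ℝ) ≠ 0),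
      sub_zero, one_div_div]
  have main : (∫⁻ ω, ENNReal.ofReal (f ω) ∂ℙ) ≤ ENNReal.ofReal (C * ((d:ℝ)/ε)) := by
    rw [lc]
    calc ∫⁻ t in Ioi (0:ℝ), ℙ {ω | t ≤ f ω}
        ≤ ∫⁻ t in Ioi (0:ℝ), (Ioc (0:ℝ) 1).indicator
            (fun t => ENNReal.ofReal (C * t ^ (-θ))) t :=
          setLIntegral_mono' measurableSet_Ioi ptw
      _ = ∫⁻ t in Ioc (0:ℝ) 1, ENNReal.ofReal (C * t ^ (-θ)) := by
          rw [lintegral_indicator measurableSet_Ioc, Measure.restrict_restrict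
            measurableSet_Ioc, Set.inter_eq_left.mpr (fun x hx => hx.1)]
      _ = ENNReal.ofReal (∫ t in Ioc (0:ℝ) 1, C * t ^ (-θ)) := by
          rw [← ofReal_integral_eq_lintegral_ofReal hIntR]
          exact (ae_restrict_iff' measurableSet_Ioc).mpr (ae_of_all _ fun t htm =>
            mul_nonneg hC0 (Real.rpow_nonneg htm.1.le _))
      _ = ENNReal.ofReal (C * ((d:ℝ)/ε)) := by rw [hval]
  have bound2 : ∫ ω, f ω ∂ℙ ≤ C * ((d:ℝ)/ε) := by
    rw [key]
    exact ENNReal.toReal_le_of_le_ofReal (by positivity) main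
  have bound1 : ∫ ω, f ω ∂ℙ ≤ 1 := by
    rw [key]
    refine ENNReal.toReal_le_of_le_ofReal zero_le_one ?_
    calc ∫⁻ ω, ENNReal.ofReal (f ω) ∂ℙ ≤ ∫⁻ _, 1 ∂ℙ :=
          lintegral_mono fun ω => ENNReal.ofReal_le_one.mpr (hf1 ω)
      _ = 1 := by simp
      _ = ENNReal.ofReal 1 := by simp
  -- identify s^θ
  have hq : s ^ θ = r ^ ((d:ℝ) - ε) / a ^ ((d:ℝ) - ε) := by
    have h1 : s = (r/a) ^ ((d:ℝ)) := by
      rw [hsdef, Real.rpow_natCast, div_pow]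
    rw [h1, ← Real.rpow_mul (by positivity)]
    have : (d:ℝ) * θ = (d:ℝ) - ε := by rw [hθdef]; field_simp
    rw [this, Real.div_rpow hr.le ha.le]
  set q : ℝ := r ^ ((d:ℝ) - ε) / a ^ ((d:ℝ) - ε) with hqdef
  have hq0 : 0 < q := div_pos (Real.rpow_pos_of_pos hr _) (Real.rpow_pos_of_pos ha _)
  show ∫ ω, f ω ∂ℙ ≤ max 1 (K * ((d:ℝ)/ε)) * min 1 q
  rcases le_or_gt 1 q with h | h
  · rw [min_eq_left h]
    calc ∫ ω, f ω ∂ℙ ≤ 1 := bound1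
      _ ≤ max 1 (K * ((d:ℝ)/ε)) * 1 := by rw [mul_one]; exact le_max_left _ _
  · rw [min_eq_right h.le]
    calc ∫ ω, f ω ∂ℙ ≤ C * ((d:ℝ)/ε) := bound2
      _ = K * ((d:ℝ)/ε) * q := by rw [hCdef, hq]; ring
      _ ≤ max 1 (K * ((d:ℝ)/ε)) * q :=
          mul_le_mul_of_nonneg_right (le_max_right _ _) hq0.le
end
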